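/- For M ≥ 4 a power of 2 and 0 < θ < π/M, the sequence b_k = 2cos(πk/M + θ/2) − 2cos(π(k+2)/M − θ/2) is increasing in k for k = 0, 1, ..., M/2 − 2. -/
import Mathlib


open Real

/-- For `M ≥ 4` a power of 2 and `0 < θ < π/M`, the sequence
`b_k = 2cos(πk/M + θ/2) − 2cos(π(k+2)/M − θ/2)` is increasing in `k`
for `k = 0, 1, ..., M/2 − 2`. -/
theorem stmt_1 (M : ℕ) (hM : 4 ≤ M) (hpow : ∃ r : ℕ, M = 2 ^ r)
    (θ : ℝ) (hθ0 : 0 < θ) (hθ : θ < π / M) :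
    ∀ k : ℕ, k + 1 ≤ M / 2 - 2 →
      2 * Real.cos (π * k / M + θ / 2) - 2 * Real.cos (π * (k + 2) / M - θ / 2)
        ≤ 2 * Real.cos (π * (k + 1) / M + θ / 2)
            - 2 * Real.cos (π * (k + 3) / M - θ / 2) := by
  intro k hk
  have hM0 : (0:ℝ) < (M:ℝ) := by positivity
  have key : ∀ j : ℕ, 2 * Real.cos (π * j / M + θ / 2) - 2 * Real.cos (π * (j + 2) / M - θ / 2)
      = 4 * Real.sin (π * (j + 1) / M) * Real.sin (π / M - θ / 2) := by
    intro j
    have h := Real.cos_sub_cos (π * j / M + θ / 2) (π * (j + 2) / M - θ / 2)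
    have e1 : (π * j / M + θ / 2 + (π * (j + 2) / M - θ / 2)) / 2 = π * (j + 1) / M := by
      field_simp; ring
    have e2 : (π * j / M + θ / 2 - (π * (j + 2) / M - θ / 2)) / 2 = -(π / M - θ / 2) := by
      field_simp; ring
    rw [e1, e2, Real.sin_neg] at h
    linarith
  have k0 := key k
  have k1 := key (k + 1)
  push_cast at k0 k1
  rw [k0, show π * ((k:ℝ) + 3) / (M:ℝ) = π * ((k:ℝ) + 1 + 2) / (M:ℝ) from by ring, k1]
  have hsinc : 0 ≤ Real.sin (π / M - θ / 2) := by
    apply Real.sin_nonneg_of_nonneg_of_le_pi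
    · linarith
    · have h1 : π / M ≤ π / 4 := by
        apply div_le_div_of_nonneg_left pi_pos.le (by norm_num)
        exact_mod_cast hM
      nlinarith [pi_pos]
  have hk' : 2 * (k + 3) ≤ M := by omega
  have hk'' : (2:ℝ) * ((k:ℝ) + 3) ≤ (M:ℝ) := by exact_mod_cast hk'
  have hmono : Real.sin (π * ((k:ℝ) + 1) / M) ≤ Real.sin (π * ((k:ℝ) + 1 + 1) / M) := by
    have h1 : 0 ≤ π * ((k:ℝ) + 1) / M := by positivity
    have h2 : 0 ≤ π * ((k:ℝ) + 1 + 1) / M := by positivity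
    have hp2 : 0 < π / 2 := by positivity
    apply Real.strictMonoOn_sin.monotoneOn
    · exact ⟨by linarith, by rw [div_le_div_iff₀ hM0 two_pos]; nlinarith [pi_pos]⟩
    · exact ⟨by linarith, by rw [div_le_div_iff₀ hM0 two_pos]; nlinarith [pi_pos]⟩
    · gcongr
      nlinarith [pi_pos]
  nlinarith [hmono, hsinc]
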